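/- Let X be a locally compact Hausdorff space and let ν be a deficient topological measure on X. The following are equivalent: (a) ν is a topological measure; (b) ν(U) = ν(C) + ν(U \ C) for every compact C and open U with C ⊆ U; (c) ν(U) ≤ ν(C) + ν(U \ C) for every compact C and open U with C ⊆ U. -/

import Mathlib

open Set Classical
open scoped ENNReal NNReal

variable {X : Type*}

/-- A deficient topological measure on a locally compact space `X`: a set function on open
and closed subsets of `X` with values in `[0,∞]`, not identically `∞`, finitely additive on
compact sets, inner compact regular on open sets, and outer regular on closed sets.
(Values on sets that are neither open nor closed are irrelevant.) -/
def IsDTM [TopologicalSpace X] (ν : Set X → ℝ≥0∞) : Prop :=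
  (∃ A : Set X, (IsOpen A ∨ IsClosed A) ∧ ν A ≠ ⊤) ∧
  (∀ C K : Set X, IsCompact C → IsCompact K → Disjoint C K → ν (C ∪ K) = ν C + ν K) ∧
  (∀ U : Set X, IsOpen U → ν U = ⨆ (K : Set X) (_ : IsCompact K ∧ K ⊆ U), ν K) ∧
  (∀ F : Set X, IsClosed F → ν F = ⨅ (U : Set X) (_ : IsOpen U ∧ F ⊆ U), ν U)

/-- A topological measure on a locally compact space `X`: a set function on open and closed
subsets of `X` with values in `[0,∞]`, not identically `∞`, additive on disjoint sets `A, B`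
whenever `A`, `B` and `A ⊔ B` each belong to the union of the collections of compact and open
sets, inner compact regular on open sets, and outer regular on closed sets. -/
def IsTM [TopologicalSpace X] (μ : Set X → ℝ≥0∞) : Prop :=
  (∃ A : Set X, (IsOpen A ∨ IsClosed A) ∧ μ A ≠ ⊤) ∧
  (∀ A B : Set X, (IsCompact A ∨ IsOpen A) → (IsCompact B ∨ IsOpen B) →
    (IsCompact (A ∪ B) ∨ IsOpen (A ∪ B)) → Disjoint A B → μ (A ∪ B) = μ A + μ B) ∧
  (∀ U : Set X, IsOpen U → μ U = ⨆ (K : Set X) (_ : IsCompact K ∧ K ⊆ U), μ K) ∧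
  (∀ F : Set X, IsClosed F → μ F = ⨅ (U : Set X) (_ : IsOpen U ∧ F ⊆ U), μ U)
section Aux

variable [TopologicalSpace X] {ν : Set X → ℝ≥0∞}

lemma dtm_compact_le_open (hν : IsDTM ν) {K U : Set X}
    (hK : IsCompact K) (hU : IsOpen U) (hKU : K ⊆ U) : ν K ≤ ν U := by
  rw [hν.2.2.1 U hU]
  exact le_iSup₂_of_le K ⟨hK, hKU⟩ le_rfl

lemma dtm_compact_le_closed (hν : IsDTM ν) {K F : Set X}
    (hK : IsCompact K) (hF : IsClosed F) (hKF : K ⊆ F) : ν K ≤ ν F := by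
  rw [hν.2.2.2 F hF]
  exact le_iInf₂ fun U hU => dtm_compact_le_open hν hK hU.1 (hKF.trans hU.2)

lemma dtm_open_le_open (hν : IsDTM ν) {V U : Set X}
    (hV : IsOpen V) (hU : IsOpen U) (hVU : V ⊆ U) : ν V ≤ ν U := by
  rw [hν.2.2.1 V hV]
  exact iSup₂_le fun K hK => dtm_compact_le_open hν hK.1 hU (hK.2.trans hVU)

lemma dtm_compact_le_compact [T2Space X] (hν : IsDTM ν) {K C : Set X}
    (hK : IsCompact K) (hC : IsCompact C) (hKC : K ⊆ C) : ν K ≤ ν C :=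
  dtm_compact_le_closed hν hK hC.isClosed hKC

/-- If `a + ν K ≤ t` for every compact `K ⊆ V` (`V` open), then `a + ν V ≤ t`. -/
lemma dtm_add_nu_le (hν : IsDTM ν) {V : Set X} (hV : IsOpen V) {a t : ℝ≥0∞}
    (h : ∀ K : Set X, IsCompact K → K ⊆ V → a + ν K ≤ t) : a + ν V ≤ t := by
  rcases eq_top_or_lt_top t with rfl | htop
  · exact le_top
  have hat : a ≤ t := le_self_add.trans (h ∅ isCompact_empty (empty_subset V))
  have ha : a ≠ ⊤ := (hat.trans_lt htop).ne
  have hVle : ν V ≤ t - a := by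
    rw [hν.2.2.1 V hV]
    exact iSup₂_le fun K hK => ENNReal.le_sub_of_add_le_left ha (h K hK.1 hK.2)
  calc a + ν V ≤ a + (t - a) := add_le_add_right hVle a
    _ = t := add_tsub_cancel_of_le hat

/-- Superadditivity: for compact `C`, open `V`, disjoint, with every compact subset of
`C ∪ V` dominated by `t`, we get `ν C + ν V ≤ t`. -/
lemma dtm_superadd (hν : IsDTM ν) {C V : Set X} (hC : IsCompact C) (hV : IsOpen V)
    (hd : Disjoint C V) {t : ℝ≥0∞}
    (h : ∀ K : Set X, IsCompact K → K ⊆ C ∪ V → ν K ≤ t) : ν C + ν V ≤ t := by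
  refine dtm_add_nu_le hν hV fun K hK hKV => ?_
  rw [← hν.2.1 C K hC hK (hd.mono_right hKV)]
  exact h (C ∪ K) (hC.union hK) (union_subset subset_union_left (hKV.trans subset_union_right))

/-- A compact set inside a disjoint union of two opens splits additively. -/
lemma dtm_split (hν : IsDTM ν) {K U₁ U₂ : Set X} (hK : IsCompact K)
    (hU₁ : IsOpen U₁) (hU₂ : IsOpen U₂) (hd : Disjoint U₁ U₂) (hsub : K ⊆ U₁ ∪ U₂) :
    ν K = ν (K \ U₂) + ν (K \ U₁) := by
  have hu : (K \ U₂) ∪ (K \ U₁) = K := by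
    ext x
    constructor
    · rintro (h | h) <;> exact h.1
    · intro hxK
      rcases hsub hxK with h | h
      · exact Or.inl ⟨hxK, fun hx₂ => disjoint_left.mp hd h hx₂⟩
      · exact Or.inr ⟨hxK, fun hx₁ => disjoint_left.mp hd hx₁ h⟩
  have hdisj : Disjoint (K \ U₂) (K \ U₁) := by
    rw [disjoint_left]
    rintro x ⟨hxK, hx₂⟩ ⟨_, hx₁⟩
    rcases hsub hxK with h | h
    · exact hx₁ h
    · exact hx₂ h
  conv_lhs => rw [← hu]
  exact hν.2.1 _ _ (hK.diff hU₂) (hK.diff hU₁) hdisj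

/-- Additivity on disjoint open sets. -/
lemma dtm_open_add (hν : IsDTM ν) {U₁ U₂ : Set X}
    (hU₁ : IsOpen U₁) (hU₂ : IsOpen U₂) (hd : Disjoint U₁ U₂) :
    ν (U₁ ∪ U₂) = ν U₁ + ν U₂ := by
  refine le_antisymm ?_ ?_
  · rw [hν.2.2.1 (U₁ ∪ U₂) (hU₁.union hU₂)]
    refine iSup₂_le fun K hK => ?_
    rw [dtm_split hν hK.1 hU₁ hU₂ hd hK.2]
    have hs₁ : K \ U₂ ⊆ U₁ := fun x hx => (hK.2 hx.1).resolve_right hx.2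
    have hs₂ : K \ U₁ ⊆ U₂ := fun x hx => (hK.2 hx.1).resolve_left hx.2
    exact add_le_add (dtm_compact_le_open hν (hK.1.diff hU₂) hU₁ hs₁)
      (dtm_compact_le_open hν (hK.1.diff hU₁) hU₂ hs₂)
  · have step : ∀ K₁ : Set X, IsCompact K₁ → K₁ ⊆ U₁ → ν K₁ + ν U₂ ≤ ν (U₁ ∪ U₂) := by
      intro K₁ hK₁ hs₁
      refine dtm_add_nu_le hν hU₂ fun K₂ hK₂ hs₂ => ?_
      rw [← hν.2.1 K₁ K₂ hK₁ hK₂ (hd.mono hs₁ hs₂)]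
      exact dtm_compact_le_open hν (hK₁.union hK₂) (hU₁.union hU₂)
        (union_subset (hs₁.trans subset_union_left) (hs₂.trans subset_union_right))
    rw [add_comm]
    refine dtm_add_nu_le hν hU₁ fun K₁ hK₁ hs₁ => ?_
    rw [add_comm]
    exact step K₁ hK₁ hs₁

end Aux

section Main

variable [TopologicalSpace X] {ν : Set X → ℝ≥0∞}

/-- Key identity: if `ν` satisfies condition (b), `A` is compact, `B` open, disjoint from `A`
with `A ∪ B` closed, then any open `V ⊇ A ∪ B` satisfies
`ν V = ν A + ν B + ν (V \ (A ∪ B))`. -/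
lemma dtm_key [T2Space X] (hν : IsDTM ν)
    (hb : ∀ C U : Set X, IsCompact C → IsOpen U → C ⊆ U → ν U = ν C + ν (U \ C))
    {A B : Set X} (hA : IsCompact A) (hB : IsOpen B) (hABcl : IsClosed (A ∪ B))
    (hd : Disjoint A B) {V : Set X} (hV : IsOpen V) (hsub : A ∪ B ⊆ V) :
    ν V = ν A + ν B + ν (V \ (A ∪ B)) := by
  have h1 : ν V = ν A + ν (V \ A) := hb A V hA hV (subset_union_left.trans hsub)
  have h2 : V \ A = B ∪ (V \ (A ∪ B)) := by
    ext x
    simp only [mem_diff, mem_union]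
    constructor
    · rintro ⟨hxV, hxA⟩
      by_cases hxB : x ∈ B
      · exact Or.inl hxB
      · exact Or.inr ⟨hxV, fun h => h.elim hxA hxB⟩
    · rintro (hxB | ⟨hxV, hx⟩)
      · exact ⟨hsub (Or.inr hxB), fun hxA => disjoint_left.mp hd hxA hxB⟩
      · exact ⟨hxV, fun hxA => hx (Or.inl hxA)⟩
  have h3 : ν (V \ A) = ν B + ν (V \ (A ∪ B)) := by
    rw [h2]
    refine dtm_open_add hν hB (hV.sdiff hABcl) ?_
    exact disjoint_left.mpr fun x hxB hx => hx.2 (Or.inr hxB)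
  rw [h1, h3, add_assoc]

/-- The hard case: condition (b) gives additivity for a compact union of a compact
and an open set. -/
lemma dtm_hard [T2Space X] (hν : IsDTM ν)
    (hb : ∀ C U : Set X, IsCompact C → IsOpen U → C ⊆ U → ν U = ν C + ν (U \ C))
    {A B : Set X} (hA : IsCompact A) (hB : IsOpen B) (hAB : IsCompact (A ∪ B))
    (hd : Disjoint A B) : ν (A ∪ B) = ν A + ν B := by
  refine le_antisymm ?_ (dtm_superadd hν hA hB hd fun K hK hs =>
    dtm_compact_le_compact hν hK hAB hs)
  by_cases htop : ν A + ν B = ⊤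
  · rw [htop]; exact le_top
  have hAfin : ν A < ⊤ := lt_top_iff_ne_top.mpr fun h =>
    htop (by rw [h, top_add])
  -- choose an open `O ⊇ A` of finite measure
  have hOlt' : (⨅ (U : Set X) (_ : IsOpen U ∧ A ⊆ U), ν U) < ⊤ := by
    rw [← hν.2.2.2 A hA.isClosed]; exact hAfin
  obtain ⟨O, hO⟩ := iInf_lt_iff.mp hOlt'
  obtain ⟨hOp, hOlt⟩ := iInf_lt_iff.mp hO
  -- `ν (A ∪ B)` is finite
  have hOB : IsOpen (O ∪ B) := hOp.1.union hB
  have hsubOB : A ∪ B ⊆ O ∪ B := union_subset (hOp.2.trans subset_union_left)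
    subset_union_right
  have hVO : ν (O ∪ B) = ν A + ν B + ν ((O ∪ B) \ (A ∪ B)) :=
    dtm_key hν hb hA hB hAB.isClosed hd hOB hsubOB
  have hrest : ν ((O ∪ B) \ (A ∪ B)) ≤ ν O := by
    refine dtm_open_le_open hν (hOB.sdiff hAB.isClosed) hOp.1 ?_
    rintro x ⟨hx, hxn⟩
    rcases hx with h | h
    · exact h
    · exact absurd (Or.inr h) hxn
  have hfin : ν (A ∪ B) ≠ ⊤ := by
    have h1 : ν (A ∪ B) ≤ ν (O ∪ B) := dtm_compact_le_open hν hAB hOB hsubOB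
    rw [hVO] at h1
    exact (h1.trans_lt (ENNReal.add_lt_top.mpr
      ⟨lt_top_iff_ne_top.mpr htop, hrest.trans_lt hOlt⟩)).ne
  -- ε-argument
  refine ENNReal.le_of_forall_pos_le_add fun ε hε _ => ?_
  have h2 : (⨅ (U : Set X) (_ : IsOpen U ∧ A ∪ B ⊆ U), ν U) < ν (A ∪ B) + ε := by
    rw [← hν.2.2.2 _ hAB.isClosed]
    exact ENNReal.lt_add_right hfin (by exact_mod_cast hε.ne')
  obtain ⟨V, hV⟩ := iInf_lt_iff.mp h2
  obtain ⟨hVp, hVlt⟩ := iInf_lt_iff.mp hV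
  have hsplit : ν V = ν A + ν B + ν (V \ (A ∪ B)) :=
    dtm_key hν hb hA hB hAB.isClosed hd hVp.1 hVp.2
  have hsup : ν (A ∪ B) + ν (V \ (A ∪ B)) ≤ ν V :=
    dtm_superadd hν hAB (hVp.1.sdiff hAB.isClosed) disjoint_sdiff_self_right
      (fun K hK hs => dtm_compact_le_open hν hK hVp.1
        (by rwa [union_diff_cancel hVp.2] at hs))
  have hrlt : ν (V \ (A ∪ B)) < ε :=
    (ENNReal.add_lt_add_iff_left hfin).mp (hsup.trans_lt hVlt)
  calc ν (A ∪ B) ≤ ν V := dtm_compact_le_open hν hAB hVp.1 hVp.2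
    _ = ν A + ν B + ν (V \ (A ∪ B)) := hsplit
    _ ≤ ν A + ν B + ε := add_le_add_right hrlt.le _

end Main

/-- Theorem 4.2 (II): for a deficient topological measure `ν` on a locally compact Hausdorff
space, the following are equivalent: (a) `ν` is a topological measure;
(b) `ν(U) = ν(C) + ν(U \ C)` for every compact `C` and open `U` with `C ⊆ U`;
(c) `ν(U) ≤ ν(C) + ν(U \ C)` for every compact `C` and open `U` with `C ⊆ U`. -/
theorem dtm_is_tm_iff
    [TopologicalSpace X] [LocallyCompactSpace X] [T2Space X]
    (ν : Set X → ℝ≥0∞) (hν : IsDTM ν) :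
    (IsTM ν ↔ ∀ C U : Set X, IsCompact C → IsOpen U → C ⊆ U →
      ν U = ν C + ν (U \ C)) ∧
    (IsTM ν ↔ ∀ C U : Set X, IsCompact C → IsOpen U → C ⊆ U →
      ν U ≤ ν C + ν (U \ C)) := by
  have tm_to_b : IsTM ν → ∀ C U : Set X, IsCompact C → IsOpen U → C ⊆ U →
      ν U = ν C + ν (U \ C) := by
    intro hT C U hC hU hCU
    have h := hT.2.1 C (U \ C) (Or.inl hC) (Or.inr (hU.sdiff hC.isClosed))
      (Or.inr (by rw [union_diff_cancel hCU]; exact hU)) disjoint_sdiff_self_right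
    rwa [union_diff_cancel hCU] at h
  have c_to_b : (∀ C U : Set X, IsCompact C → IsOpen U → C ⊆ U →
      ν U ≤ ν C + ν (U \ C)) → ∀ C U : Set X, IsCompact C → IsOpen U → C ⊆ U →
      ν U = ν C + ν (U \ C) := by
    intro hc C U hC hU hCU
    refine le_antisymm (hc C U hC hU hCU) ?_
    exact dtm_superadd hν hC (hU.sdiff hC.isClosed) disjoint_sdiff_self_right
      (fun K hK hKs => dtm_compact_le_open hν hK hU
        (by rwa [union_diff_cancel hCU] at hKs))
  have b_to_tm : (∀ C U : Set X, IsCompact C → IsOpen U → C ⊆ U →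
      ν U = ν C + ν (U \ C)) → IsTM ν := by
    intro hb
    have mix : ∀ A B : Set X, IsCompact A → IsOpen B →
        (IsCompact (A ∪ B) ∨ IsOpen (A ∪ B)) → Disjoint A B →
        ν (A ∪ B) = ν A + ν B := by
      intro A B hAc hBo hAB hd
      rcases hAB with hABc | hABo
      · exact dtm_hard hν hb hAc hBo hABc hd
      · have hBe : (A ∪ B) \ A = B := by
          rw [union_diff_left]
          exact hd.symm.sdiff_eq_left
        have h := hb A (A ∪ B) hAc hABo subset_union_left
        rwa [hBe] at h
    refine ⟨hν.1, ?_, hν.2.2.1, hν.2.2.2⟩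
    intro A B hA hB hAB hd
    rcases hA with hAc | hAo
    · rcases hB with hBc | hBo
      · exact hν.2.1 A B hAc hBc hd
      · exact mix A B hAc hBo hAB hd
    · rcases hB with hBc | hBo
      · have h := mix B A hBc hAo (by rwa [union_comm]) hd.symm
        rw [union_comm, h, add_comm]
      · exact dtm_open_add hν hAo hBo hd
  refine ⟨⟨tm_to_b, b_to_tm⟩, ?_⟩
  exact ⟨fun hT C U hC hU hCU => (tm_to_b hT C U hC hU hCU).le,
    fun hc => b_to_tm (c_to_b hc)⟩
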